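/- Under Assumptions 1.1, 1.2 and 1.3, the sequence {f(θ_n)}_{n≥0} converges almost surely on Λ = {sup_{n≥0} ‖θ_n‖ < ∞}, with lim_{n→∞} f(θ_n) = liminf_{n→∞} f(θ_n). -/

import Mathlib

open Filter Real NNReal InnerProductSpace
set_option maxHeartbeats 1000000

section aux1

lemma locallyLipschitz_bound_on_compact {E F : Type*} [NormedAddCommGroup E] [NormedAddCommGroup F]
    {g : E → F} (hg : LocallyLipschitz g) {K : Set E} (hK : IsCompact K) :
    ∃ L : ℝ, 0 ≤ L ∧ ∀ x ∈ K, ∀ y ∈ K, ‖g x - g y‖ ≤ L * ‖x - y‖ := by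
  classical
  have h : ∀ x : E, ∃ c : ℝ≥0 × ℝ, 0 < c.2 ∧ LipschitzOnWith c.1 g (Metric.ball x c.2) := by
    intro x
    obtain ⟨Kx, t, ht, hlip⟩ := hg x
    obtain ⟨r, hr, hball⟩ := Metric.mem_nhds_iff.1 ht
    exact ⟨(Kx, r), hr, hlip.mono hball⟩
  choose c hcpos hclip using h
  -- finite subcover
  obtain ⟨t, htK, hcover⟩ := hK.elim_nhds_subcover (fun x => Metric.ball x (c x).2)
    (fun x _ => Metric.ball_mem_nhds x (hcpos x))
  -- Lebesgue number for the finite cover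
  obtain ⟨δ, hδ, hleb⟩ := lebesgue_number_lemma_of_metric (ι := {x // x ∈ t}) hK
    (c := fun i => Metric.ball (i : E) ((c (i : E)).2))
    (fun i => Metric.isOpen_ball) (by
      intro x hx
      obtain ⟨y, hyt, hxy⟩ := Set.mem_iUnion₂.1 (hcover hx)
      exact Set.mem_iUnion.2 ⟨⟨y, hyt⟩, hxy⟩)
  -- bound on image
  have hgc : Continuous g := hg.continuous
  obtain ⟨Cg, hCg⟩ := (hK.image hgc).isBounded.exists_norm_le
  set L0 : ℝ≥0 := t.sup (fun x => (c x).1) with hL0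
  refine ⟨max (L0 : ℝ) (2 * Cg / δ), le_max_of_le_left L0.coe_nonneg, ?_⟩
  intro x hx y hy
  rcases le_or_gt δ (dist x y) with hd | hd
  · have h1 : ‖g x - g y‖ ≤ 2 * Cg := by
      have := hCg (g x) ⟨x, hx, rfl⟩
      have := hCg (g y) ⟨y, hy, rfl⟩
      calc ‖g x - g y‖ ≤ ‖g x‖ + ‖g y‖ := norm_sub_le _ _
        _ ≤ 2 * Cg := by linarith
    have hCg0 : (0:ℝ) ≤ Cg := le_trans (norm_nonneg _) (hCg (g x) ⟨x, hx, rfl⟩)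
    calc ‖g x - g y‖ ≤ 2 * Cg := h1
      _ = (2 * Cg / δ) * δ := by field_simp
      _ ≤ (2 * Cg / δ) * ‖x - y‖ := by
          rw [← dist_eq_norm]
          exact mul_le_mul_of_nonneg_left hd (by positivity)
      _ ≤ max (L0 : ℝ) (2 * Cg / δ) * ‖x - y‖ := by
          exact mul_le_mul_of_nonneg_right (le_max_right _ _) (norm_nonneg _)
  · obtain ⟨i, hi⟩ := hleb x hx
    have hxi : x ∈ Metric.ball (i : E) (c i).2 := hi (Metric.mem_ball_self hδ)
    have hyi : y ∈ Metric.ball (i : E) (c i).2 := hi (by simpa [Metric.mem_ball, dist_comm] using hd)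
    have := (hclip i) hxi hyi
    have hle : ((c (i:E)).1 : ℝ) ≤ (L0 : ℝ) := by
      exact_mod_cast Finset.le_sup (f := fun x => (c x).1) i.2
    calc ‖g x - g y‖ = dist (g x) (g y) := (dist_eq_norm _ _).symm
      _ ≤ (c (i:E)).1 * dist x y := (hclip (i:E)).dist_le_mul x hxi y hyi
      _ ≤ max (L0 : ℝ) (2 * Cg / δ) * ‖x - y‖ := by
          rw [dist_eq_norm]
          exact mul_le_mul (hle.trans (le_max_left _ _)) le_rfl (norm_nonneg _)
            (le_trans L0.coe_nonneg (le_max_left _ _))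


end aux1

section aux2

variable {E : Type*} [NormedAddCommGroup E] [InnerProductSpace ℝ E] [CompleteSpace E]

lemma fderiv_eq_innerSL {f : E → ℝ} (hf : Differentiable ℝ f) (z : E) :
    fderiv ℝ f z = innerSL ℝ (gradient f z) := by
  ext w
  have h1 : HasFDerivAt f (toDual ℝ E (gradient f z)) z := (hf z).hasGradientAt.hasFDerivAt
  rw [h1.fderiv]
  simp [toDual_apply_apply]

lemma mvt_bound {f : E → ℝ} (hf : Differentiable ℝ f) {s : Set E} (hs : Convex ℝ s)
    {G : ℝ} (hG : ∀ z ∈ s, ‖gradient f z‖ ≤ G) {x y : E} (hx : x ∈ s) (hy : y ∈ s) :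
    ‖f y - f x‖ ≤ G * ‖y - x‖ := by
  apply hs.norm_image_sub_le_of_norm_fderiv_le (fun z _ => hf z) (fun z hz => ?_) hx hy
  rw [fderiv_eq_innerSL hf, innerSL_apply_norm]
  exact hG z hz

lemma descent_bound {f : E → ℝ} (hf : Differentiable ℝ f) {s : Set E} (hs : Convex ℝ s)
    {L : ℝ} (hL : 0 ≤ L)
    (hlip : ∀ p ∈ s, ∀ q ∈ s, ‖gradient f p - gradient f q‖ ≤ L * ‖p - q‖)
    {x y : E} (hx : x ∈ s) (hy : y ∈ s) :
    f y ≤ f x + inner ℝ (gradient f x) (y - x) + L * ‖y - x‖ ^ 2 := by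
  set g0 := gradient f x with hg0
  set φ : E → ℝ := fun z => f z - innerSL ℝ g0 z with hφ
  have hseg : segment ℝ x y ⊆ s := hs.segment_subset hx hy
  have key : ‖φ y - φ x‖ ≤ (L * ‖y - x‖) * ‖y - x‖ := by
    apply (convex_segment x y).norm_image_sub_le_of_norm_hasFDerivWithin_le
      (f' := fun z => fderiv ℝ f z - innerSL ℝ g0) (fun z hz => ?_) (fun z hz => ?_)
      (left_mem_segment ℝ x y) (right_mem_segment ℝ x y)
    · exact (((hf z).hasFDerivAt.sub ((innerSL ℝ g0).hasFDerivAt)).hasFDerivWithinAt)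
    · show ‖fderiv ℝ f z - innerSL ℝ g0‖ ≤ L * ‖y - x‖
      have heq : fderiv ℝ f z - innerSL ℝ g0 = innerSL ℝ (gradient f z - g0) := by
        ext w
        rw [fderiv_eq_innerSL hf]
        simp [inner_sub_left]
      rw [heq, innerSL_apply_norm]
      obtain ⟨t, ht, hzt⟩ := (segment_eq_image' ℝ x y ▸ hz :
        z ∈ (fun t : ℝ => x + t • (y - x)) '' Set.Icc 0 1)
      have hzx : ‖z - x‖ ≤ ‖y - x‖ := by
        rw [← hzt]
        simp only [add_sub_cancel_left, norm_smul, Real.norm_eq_abs]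
        rw [abs_of_nonneg ht.1]
        nlinarith [norm_nonneg (y - x), ht.2]
      calc ‖gradient f z - g0‖ ≤ L * ‖z - x‖ := hlip z (hseg hz) x hx
        _ ≤ L * ‖y - x‖ := mul_le_mul_of_nonneg_left hzx hL
  have h1 : φ y - φ x = f y - f x - inner ℝ g0 (y - x) := by
    simp [hφ, inner_sub_right]; ring
  have key2 : f y - f x - inner ℝ g0 (y - x) ≤ L * ‖y - x‖ * ‖y - x‖ := by
    rw [← h1]
    exact (le_abs_self _).trans (by rwa [Real.norm_eq_abs] at key)
  have hsq : ‖y - x‖ ^ 2 = ‖y - x‖ * ‖y - x‖ := sq (‖y - x‖) ▸ by ring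
  nlinarith [key2]

end aux2

section aux3

lemma abel_bound {E : Type*} [NormedAddCommGroup E] [NormedSpace ℝ E]
    (v : ℕ → E) (b : ℕ → ℝ) (B : ℝ) (n k : ℕ) (hnk : n ≤ k)
    (hb0 : ∀ i, 0 ≤ b i)
    (hbmono : ∀ i, n ≤ i → i < k → b (i + 1) ≤ b i)
    (hS : ∀ i, n ≤ i → i ≤ k → ‖∑ j ∈ Finset.Icc n i, v j‖ ≤ B) :
    ‖∑ i ∈ Finset.Icc n k, b i • v i‖ ≤ B * b n := by
  set T : ℕ → E := fun j => ∑ i ∈ Finset.Icc n j, b i • v i with hT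
  set S : ℕ → E := fun j => ∑ i ∈ Finset.Icc n j, v i with hSdef
  have hB0 : 0 ≤ B := le_trans (norm_nonneg _) (hS n le_rfl hnk)
  have claim : ∀ j, n ≤ j → (j ≤ k → ‖T j - b j • S j‖ ≤ B * (b n - b j)) := by
    intro j hnj
    induction j, hnj using Nat.le_induction with
    | base =>
        intro _
        have : T n - b n • S n = 0 := by
          simp [hT, hSdef, Finset.Icc_self]
        rw [this]
        simp
    | succ j hnj ih =>
        intro hjk
        have hjk' : j ≤ k := le_trans (Nat.le_succ j) hjk
        have hjlt : j < k := lt_of_lt_of_le (Nat.lt_succ_self j) hjk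
        have hTs : T (j + 1) = T j + b (j + 1) • v (j + 1) :=
          Finset.sum_Icc_succ_top (by omega) _
        have hSs : S (j + 1) = S j + v (j + 1) :=
          Finset.sum_Icc_succ_top (by omega) _
        have hkey : T (j + 1) - b (j + 1) • S (j + 1)
            = (T j - b j • S j) + (b j - b (j + 1)) • S j := by
          rw [hTs, hSs, sub_smul, smul_add]
          abel
        rw [hkey]
        have h1 := ih hjk'
        have h2 : ‖(b j - b (j + 1)) • S j‖ ≤ (b j - b (j + 1)) * B := by
          rw [norm_smul, Real.norm_eq_abs, abs_of_nonneg (by linarith [hbmono j hnj hjlt])]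
          exact mul_le_mul_of_nonneg_left (hS j hnj hjk') (by linarith [hbmono j hnj hjlt])
        calc ‖(T j - b j • S j) + (b j - b (j + 1)) • S j‖
            ≤ ‖T j - b j • S j‖ + ‖(b j - b (j + 1)) • S j‖ := norm_add_le _ _
          _ ≤ B * (b n - b j) + (b j - b (j + 1)) * B := add_le_add h1 h2
          _ = B * (b n - b (j + 1)) := by ring
  have h3 := claim k hnk le_rfl
  have h4 : ‖b k • S k‖ ≤ b k * B := by
    rw [norm_smul, Real.norm_eq_abs, abs_of_nonneg (hb0 k)]
    exact mul_le_mul_of_nonneg_left (hS k hnk le_rfl) (hb0 k)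
  calc ‖T k‖ = ‖(T k - b k • S k) + b k • S k‖ := by rw [sub_add_cancel]
    _ ≤ ‖T k - b k • S k‖ + ‖b k • S k‖ := norm_add_le _ _
    _ ≤ B * (b n - b k) + b k * B := add_le_add h3 h4
    _ = B * b n := by ring

lemma rpow_gap {r : ℝ} (hr : 1 < r) {x : ℝ} (hx : 1 ≤ x) :
    (r - 1) / (2 * (2 * x) ^ r) ≤ (x ^ (r - 1))⁻¹ - ((x + 1 / 2) ^ (r - 1))⁻¹ := by
  have hx0 : (0:ℝ) < x := lt_of_lt_of_le one_pos hx
  have hx2 : x < x + 1 / 2 := by linarith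
  have hcont : ContinuousOn (fun t : ℝ => t ^ (1 - r)) (Set.Icc x (x + 1/2)) := by
    apply ContinuousOn.rpow_const continuousOn_id
    intro t ht
    exact Or.inl (by rintro rfl; exact absurd ht.1 (by push_neg; linarith))
  have hderiv : ∀ t ∈ Set.Ioo x (x + 1/2),
      HasDerivAt (fun u : ℝ => u ^ (1 - r)) ((1 - r) * t ^ (1 - r - 1)) t := by
    intro t ht
    exact Real.hasDerivAt_rpow_const (Or.inl (ne_of_gt (by linarith [ht.1] : (0:ℝ) < t)))
  obtain ⟨c, hc, hslope⟩ := exists_hasDerivAt_eq_slope (fun u : ℝ => u ^ (1 - r))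
    (fun t => (1 - r) * t ^ (1 - r - 1)) hx2 hcont hderiv
  have hc0 : 0 < c := lt_trans hx0 hc.1
  have hcle : c ≤ 2 * x := by nlinarith [hc.2, hx]
  -- rewrite x ^ (1 - r) as inverses
  have hinv : ∀ y : ℝ, 0 < y → y ^ (1 - r) = (y ^ (r - 1))⁻¹ := by
    intro y hy
    rw [show (1 - r) = -(r - 1) by ring, Real.rpow_neg hy.le]
  rw [show (1 - r - 1 : ℝ) = -r by ring] at hslope
  have hslope' : x ^ (1 - r) - (x + 1/2) ^ (1 - r) = (r - 1) * c ^ (-r) * (1/2) := by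
    rw [show x + 1/2 - x = (1/2:ℝ) by ring] at hslope
    rw [div_div_eq_mul_div] at hslope
    norm_num at hslope
    linarith [hslope]
  have hcr : (2 * x) ^ (-r) ≤ c ^ (-r) := by
    rw [Real.rpow_neg hc0.le, Real.rpow_neg (by positivity)]
    have h2 : c ^ r ≤ (2 * x) ^ r := Real.rpow_le_rpow hc0.le hcle (by linarith)
    exact inv_anti₀ (Real.rpow_pos_of_pos hc0 r) h2
  have h2xr : (2 * x) ^ (-r) = ((2 * x) ^ r)⁻¹ := by
    rw [Real.rpow_neg (by positivity)]
  have hfin : (r - 1) * ((2*x) ^ r)⁻¹ * (1/2) ≤ x ^ (1 - r) - (x + 1/2) ^ (1 - r) := by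
    rw [hslope', ← h2xr]
    have := mul_le_mul_of_nonneg_left hcr (by linarith : (0:ℝ) ≤ r - 1)
    nlinarith [this]
  rw [hinv x hx0, hinv (x + 1/2) (by linarith)] at hfin
  have hpos : (0:ℝ) < (2 * x) ^ r := Real.rpow_pos_of_pos (by positivity) r
  calc (r - 1) / (2 * (2 * x) ^ r) = (r - 1) * ((2*x) ^ r)⁻¹ * (1/2) := by
        rw [div_eq_mul_inv, mul_inv]; ring
    _ ≤ _ := hfin

end aux3

section aux4

lemma tendsto_liminf_of_quasi (F : ℕ → ℝ) (M : ℝ) (hbd : ∀ n, |F n| ≤ M)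
    (ε : ℕ → ℝ) (hε : Tendsto ε atTop (nhds 0)) (N : ℕ)
    (h : ∀ n, N ≤ n → ∀ m, n ≤ m → F m ≤ F n + ε n) :
    Tendsto F atTop (nhds (liminf F atTop)) := by
  have hbdd : IsBoundedUnder (· ≤ ·) atTop F :=
    isBoundedUnder_of ⟨M, fun n => (abs_le.1 (hbd n)).2⟩
  have hbdd' : IsBoundedUnder (· ≥ ·) atTop F :=
    isBoundedUnder_of ⟨-M, fun n => (abs_le.1 (hbd n)).1⟩
  have key : limsup F atTop ≤ liminf F atTop := by
    refine le_of_forall_pos_le_add ?_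
    intro δ hδ
    have h1 : ∀ᶠ n in atTop, |ε n| ≤ δ / 2 ∧ N ≤ n := by
      filter_upwards [hε.eventually (eventually_abs_sub_lt 0 (by positivity : (0:ℝ) < δ/2)),
        eventually_ge_atTop N] with n h1 h2
      refine ⟨?_, h2⟩
      simpa using h1.le
    have h2 : ∃ᶠ n in atTop, F n < liminf F atTop + δ / 2 :=
      frequently_lt_of_liminf_lt hbdd.isCoboundedUnder_ge (by linarith)
    obtain ⟨n, hn1, hn2, hn3⟩ := (h2.and_eventually h1).exists
    have hup : ∀ᶠ m in atTop, F m ≤ liminf F atTop + δ := by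
      filter_upwards [eventually_ge_atTop n] with m hm
      have := h n hn3 m hm
      have := (abs_le.1 hn2).2
      linarith
    exact limsup_le_of_le hbdd'.isCoboundedUnder_le hup
  have key2 : liminf F atTop ≤ limsup F atTop := liminf_le_limsup hbdd hbdd'
  exact tendsto_of_liminf_eq_limsup rfl (le_antisymm key key2) hbdd hbdd'

end aux4

section core
variable {E : Type*} [NormedAddCommGroup E] [InnerProductSpace ℝ E] [FiniteDimensional ℝ E]

-- window lemma infrastructure: properties of a
lemma sgd_core
    (f : E → ℝ) (hfd : Differentiable ℝ f)
    (hlip : LocallyLipschitz (fun x => gradient f x))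
    (α : ℕ → ℝ) (hαpos : ∀ n, 0 < α n)
    (x e : ℕ → E)
    (hrec : ∀ n, x (n + 1) = x n - α n • (gradient f (x n) + e n))
    (hα0 : Tendsto α atTop (nhds 0))
    (γ : ℕ → ℝ) (hγ : ∀ n, γ n = ∑ i ∈ Finset.range n, α i)
    (hαdiv : Tendsto γ atTop atTop)
    (a : ℕ → ℕ)
    (ha : ∀ n, a n = sSup {k | n ≤ k ∧ γ k - γ n ≤ 1})
    (r : ℝ) (hr : 1 < r)
    (C : ℝ) (hC : ∀ n, ‖x n‖ ≤ C)
    (B : ℝ) (N0 : ℕ)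
    (hB : ∀ n, N0 ≤ n → ∀ k, n ≤ k → k < a n →
      ‖∑ i ∈ Finset.Icc n k, (α i * γ i ^ r) • e i‖ ≤ B) :
    Tendsto (fun n => f (x n)) atTop (nhds (liminf (fun n => f (x n)) atTop)) := by
  classical
  -- basic γ facts
  have hγsucc : ∀ n, γ (n + 1) = γ n + α n := by
    intro n; rw [hγ, hγ, Finset.sum_range_succ]
  have hγmono : Monotone γ :=
    monotone_nat_of_le_succ (fun n => by rw [hγsucc]; linarith [hαpos n])
  have hγ0 : ∀ n, 0 ≤ γ n := by
    intro n; rw [hγ]; exact Finset.sum_nonneg (fun i _ => (hαpos i).le)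
  -- facts about a
  have haS : ∀ n, a n ∈ {k | n ≤ k ∧ γ k - γ n ≤ 1} ∧
      ∀ k, n ≤ k → γ k - γ n ≤ 1 → k ≤ a n := by
    intro n
    have hbdd : BddAbove {k | n ≤ k ∧ γ k - γ n ≤ 1} := by
      obtain ⟨M, hM⟩ := (hαdiv.eventually_gt_atTop (γ n + 1)).exists_forall_of_atTop
      refine ⟨M, fun k hk => ?_⟩
      by_contra hkM
      push_neg at hkM
      have := hM k hkM.le
      have := hk.2
      linarith
    have hne : {k | n ≤ k ∧ γ k - γ n ≤ 1}.Nonempty := ⟨n, le_rfl, by linarith⟩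
    constructor
    · rw [ha]; exact Nat.sSup_mem hne hbdd
    · intro k h1 h2
      rw [ha]; exact le_csSup hbdd ⟨h1, h2⟩
  have ha_ge : ∀ n, n ≤ a n := fun n => (haS n).1.1
  have ha_le : ∀ n, γ (a n) ≤ γ n + 1 := fun n => by linarith [(haS n).1.2]
  have ha_gt : ∀ n, γ n + 1 < γ (a n + 1) := by
    intro n
    by_contra hcon
    push_neg at hcon
    have := (haS n).2 (a n + 1) (le_trans (ha_ge n) (Nat.le_succ _)) (by linarith)
    omega
  -- constants
  set K : Set E := Metric.closedBall 0 (C + 2) with hK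
  have hKcompact : IsCompact K := isCompact_closedBall 0 (C + 2)
  have hKconvex : Convex ℝ K := convex_closedBall 0 (C + 2)
  have hC0 : 0 ≤ C := le_trans (norm_nonneg _) (hC 0)
  have hxK : ∀ n, x n ∈ K := by
    intro n
    rw [hK, Metric.mem_closedBall, dist_zero_right]
    linarith [hC n]
  obtain ⟨L, hL0, hLlip⟩ := locallyLipschitz_bound_on_compact hlip hKcompact
  have hgcont : Continuous (fun z => gradient f z) := hlip.continuous
  obtain ⟨G, hG⟩ := (hKcompact.image hgcont).isBounded.exists_norm_le
  set L1 : ℝ := max L 1 with hL1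
  set G1 : ℝ := max G 1 with hG1
  set B1 : ℝ := max B 1 with hB1
  have hL1_1 : (1:ℝ) ≤ L1 := le_max_right _ _
  have hG1_1 : (1:ℝ) ≤ G1 := le_max_right _ _
  have hB1_1 : (1:ℝ) ≤ B1 := le_max_right _ _
  have hL1' : ∀ p ∈ K, ∀ q ∈ K, ‖gradient f p - gradient f q‖ ≤ L1 * ‖p - q‖ := by
    intro p hp q hq
    exact (hLlip p hp q hq).trans
      (mul_le_mul_of_nonneg_right (le_max_left _ _) (norm_nonneg _))
  have hG1' : ∀ z ∈ K, ‖gradient f z‖ ≤ G1 := by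
    intro z hz
    exact (hG _ ⟨z, hz, rfl⟩).trans (le_max_left _ _)
  set K0 : ℝ := 2 * L1 * G1 * B1 with hK0def
  have hLG1 : (1:ℝ) ≤ L1 * G1 := by nlinarith [hL1_1, hG1_1]
  have hLGB1 : (1:ℝ) ≤ L1 * G1 * B1 := by nlinarith [hLG1, hB1_1]
  have hK0_1 : (1:ℝ) ≤ K0 := by rw [hK0def]; nlinarith [hLGB1]
  set c : ℝ := K0 * 2 ^ (r + 1) / (r - 1) + K0 with hcdef
  have hr1 : (0:ℝ) < r - 1 := by linarith
  have h2pow : (0:ℝ) < 2 ^ (r + 1) := Real.rpow_pos_of_pos two_pos _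
  have hK0pos : (0:ℝ) < K0 := lt_of_lt_of_le one_pos hK0_1
  have hcK0 : K0 ≤ c := by
    rw [hcdef]
    have h9 : 0 ≤ K0 * 2 ^ (r + 1) / (r - 1) := by positivity
    linarith
  have hc0 : 0 < c := lt_of_lt_of_le (by linarith) hcK0
  -- choose N
  have hev : ∀ᶠ n in atTop, α n ≤ 1/2 ∧ α n * L1 ≤ 1 ∧ α n * G1 ≤ 1 ∧
      1 ≤ γ n ∧ B1 ≤ γ n ∧ N0 ≤ n := by
    have e1 : ∀ᶠ n in atTop, α n ≤ 1/2 := by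
      have := hα0.eventually (eventually_le_nhds (by norm_num : (0:ℝ) < 1/2))
      exact this
    have e2 : ∀ᶠ n in atTop, α n * L1 ≤ 1 := by
      have h := hα0.eventually (eventually_le_nhds (show (0:ℝ) < 1/L1 by positivity))
      filter_upwards [h, hα0.eventually (eventually_ge_nhds (show (-1:ℝ) < 0 by norm_num))] with n hn hn'
      calc α n * L1 ≤ (1/L1) * L1 := by
            apply mul_le_mul_of_nonneg_right hn (by linarith)
        _ = 1 := by field_simp
    have e3 : ∀ᶠ n in atTop, α n * G1 ≤ 1 := by
      have h := hα0.eventually (eventually_le_nhds (show (0:ℝ) < 1/G1 by positivity))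
      filter_upwards [h] with n hn
      calc α n * G1 ≤ (1/G1) * G1 := mul_le_mul_of_nonneg_right hn (by linarith)
        _ = 1 := by field_simp
    filter_upwards [e1, e2, e3, hαdiv.eventually_ge_atTop 1,
      hαdiv.eventually_ge_atTop B1, eventually_ge_atTop N0] with n h1 h2 h3 h4 h5 h6
    exact ⟨h1, h2, h3, h4, h5, h6⟩
  obtain ⟨N, hN⟩ := hev.exists_forall_of_atTop
  -- window lemma
  have window : ∀ n, N ≤ n → ∀ m, n ≤ m → m ≤ a n →
      f (x m) ≤ f (x n) + K0 * (γ n ^ r)⁻¹ := by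
    intro n hn
    have hαn := hN n hn
    have hγn1 : (1:ℝ) ≤ γ n := hαn.2.2.2.1
    have hγnpos : (0:ℝ) < γ n := by linarith
    have hγnr_pos : (0:ℝ) < γ n ^ r := Real.rpow_pos_of_pos hγnpos r
    set ρ : ℝ := B1 * (γ n ^ r)⁻¹ with hρdef
    have hρ0 : 0 ≤ ρ := by positivity
    have hρ1 : ρ ≤ 1 := by
      rw [hρdef, ← div_eq_mul_inv, div_le_one hγnr_pos]
      calc B1 ≤ γ n := hαn.2.2.2.2.1
        _ = γ n ^ (1:ℝ) := (Real.rpow_one _).symm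
        _ ≤ γ n ^ r := Real.rpow_le_rpow_of_exponent_le hγn1 hr.le
    set sseq : ℕ → E := fun k => ∑ i ∈ Finset.Ico n k, α i • e i with hsseq
    set u : ℕ → E := fun k => x k + sseq k with hu
    -- smallness of sseq within the window
    have hs_small : ∀ k, n ≤ k → k ≤ a n → ‖sseq k‖ ≤ ρ := by
      intro k hk1 hk2
      rcases Nat.eq_or_lt_of_le hk1 with heq | hlt
      · rw [hsseq]
        simp [← heq, hρ0]
      · obtain ⟨m, rfl⟩ : ∃ m, k = m + 1 := ⟨k - 1, by omega⟩
        have hnm : n ≤ m := by omega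
        have hIco : Finset.Ico n (m + 1) = Finset.Icc n m := by
          rw [Finset.Ico_add_one_right_eq_Icc]
        have hterm : ∀ i ∈ Finset.Icc n m,
            α i • e i = ((γ i ^ r)⁻¹ : ℝ) • ((α i * γ i ^ r) • e i) := by
          intro i hi
          have hi' : n ≤ i := (Finset.mem_Icc.1 hi).1
          have hγi : (0:ℝ) < γ i := lt_of_lt_of_le hγnpos (hγmono hi')
          have hγir : (0:ℝ) < γ i ^ r := Real.rpow_pos_of_pos hγi r
          rw [smul_smul]
          congr 1
          field_simp
        have hsum : sseq (m + 1) =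
            ∑ i ∈ Finset.Icc n m, ((γ i ^ r)⁻¹ : ℝ) • ((α i * γ i ^ r) • e i) := by
          rw [hsseq]
          simp only []
          rw [hIco]
          exact Finset.sum_congr rfl hterm
        rw [hsum, hρdef]
        apply abel_bound (fun i => (α i * γ i ^ r) • e i) (fun i => (γ i ^ r)⁻¹) B1 n m hnm
        · intro i
          exact inv_nonneg.2 (Real.rpow_nonneg (hγ0 i) r)
        · intro i hi1 hi2
          have h1 : γ i ^ r ≤ γ (i+1) ^ r :=
            Real.rpow_le_rpow (hγ0 i) (hγmono (Nat.le_succ i)) (by linarith)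
          have h2 : (0:ℝ) < γ i ^ r :=
            Real.rpow_pos_of_pos (lt_of_lt_of_le hγnpos (hγmono hi1)) r
          exact inv_anti₀ h2 h1
        · intro i hi1 hi2
          have : i < a n := by omega
          exact (hB n (le_trans hαn.2.2.2.2.2 le_rfl) i hi1 this).trans (le_max_left _ _)
    -- u stays in the ball
    have hunorm : ∀ k, n ≤ k → k ≤ a n → u k ∈ K := by
      intro k hk1 hk2
      rw [hK, Metric.mem_closedBall, dist_zero_right, hu]
      calc ‖x k + sseq k‖ ≤ ‖x k‖ + ‖sseq k‖ := norm_add_le _ _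
        _ ≤ C + 1 := add_le_add (hC k) ((hs_small k hk1 hk2).trans hρ1)
        _ ≤ C + 2 := by linarith
    -- recursion for u
    have hu_rec : ∀ k, n ≤ k → u (k + 1) = u k - α k • gradient f (x k) := by
      intro k hk
      have hss : sseq (k + 1) = sseq k + α k • e k := Finset.sum_Ico_succ_top hk _
      rw [hu]
      simp only []
      rw [hss, hrec k, smul_add]
      abel
    -- descent estimate inside the window
    have main : ∀ m, n ≤ m → m ≤ a n →
        f (u m) ≤ f (x n) + (γ m - γ n) * (L1 * G1 * ρ) := by
      intro m hm
      induction m, hm using Nat.le_induction with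
      | base =>
          intro _
          have : u n = x n := by
            rw [hu]; simp [hsseq]
          rw [this]
          simp
      | succ m hnm ih =>
          intro hm1
          have hma : m ≤ a n := le_trans (Nat.le_succ m) hm1
          have hαm := hN m (le_trans hn hnm)
          set gm := gradient f (x m) with hgm
          set gu := gradient f (u m) with hgu
          have humem : u m ∈ K := hunorm m hnm hma
          have hum1mem : u (m + 1) ∈ K := hunorm (m + 1) (by omega) hm1
          have hstep : u (m + 1) - u m = -(α m • gm) := by
            rw [hu_rec m hnm]; abel
          have hdesc := descent_bound hfd hKconvex (le_trans zero_le_one hL1_1)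
            hL1' humem hum1mem
          rw [hstep] at hdesc
          have hinner1 : (inner ℝ gu (-(α m • gm)) : ℝ) = -(α m * inner ℝ gu gm) := by
            rw [inner_neg_right, real_inner_smul_right]
          have hgugm : (inner ℝ gu gm : ℝ) = ‖gm‖^2 + inner ℝ (gu - gm) gm := by
            rw [inner_sub_left, real_inner_self_eq_norm_sq]
            ring
          have hcross : -(L1 * ρ * G1) ≤ (inner ℝ (gu - gm) gm : ℝ) := by
            have h1 : |(inner ℝ (gu - gm) gm : ℝ)| ≤ ‖gu - gm‖ * ‖gm‖ :=
              abs_real_inner_le_norm _ _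
            have h2 : ‖gu - gm‖ ≤ L1 * ρ := by
              have h3 := hL1' (u m) humem (x m) (hxK m)
              have h4 : u m - x m = sseq m := by rw [hu]; simp
              rw [h4] at h3
              exact h3.trans (mul_le_mul_of_nonneg_left (hs_small m hnm hma)
                (le_trans zero_le_one hL1_1))
            have h5 : ‖gu - gm‖ * ‖gm‖ ≤ (L1 * ρ) * G1 := by
              apply mul_le_mul h2 (hG1' (x m) (hxK m)) (norm_nonneg _)
              positivity
            calc -(L1 * ρ * G1) = -((L1 * ρ) * G1) := by ring
              _ ≤ -|(inner ℝ (gu - gm) gm : ℝ)| := by linarith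
              _ ≤ _ := neg_abs_le _
          have hnrm : ‖-(α m • gm)‖^2 = α m^2 * ‖gm‖^2 := by
            rw [norm_neg, norm_smul, Real.norm_eq_abs, abs_of_pos (hαpos m), mul_pow]
          have habs : L1 * (α m^2 * ‖gm‖^2) ≤ α m * ‖gm‖^2 := by
            have h6 : L1 * α m ≤ 1 := by linarith [hαm.2.1, mul_comm (α m) L1]
            nlinarith [sq_nonneg (‖gm‖), hαpos m, sq_nonneg (α m)]
          have hγs : γ (m + 1) - γ n = (γ m - γ n) + α m := by
            rw [hγsucc]; ring
          have := ih hma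
          rw [hinner1, hgugm] at hdesc
          rw [hγs]
          have hαm0 := (hαpos m).le
          nlinarith [hdesc, hcross, this, hαpos m, sq_nonneg (‖gm‖)]
    -- conclude for x m
    intro m hm1 hm2
    have h7 := main m hm1 hm2
    have h8 : ‖f (x m) - f (u m)‖ ≤ G1 * ‖x m - u m‖ :=
      mvt_bound hfd hKconvex hG1' (hunorm m hm1 hm2) (hxK m)
    have h9 : x m - u m = -sseq m := by rw [hu]; simp
    have h10 : ‖x m - u m‖ ≤ ρ := by rw [h9, norm_neg]; exact hs_small m hm1 hm2
    have h11 : f (x m) - f (u m) ≤ G1 * ρ := by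
      have h8' : |f (x m) - f (u m)| ≤ G1 * ‖x m - u m‖ := by
        rw [← Real.norm_eq_abs]; exact h8
      have := (le_abs_self (f (x m) - f (u m))).trans h8'
      have h12 : G1 * ‖x m - u m‖ ≤ G1 * ρ :=
        mul_le_mul_of_nonneg_left h10 (by linarith)
      linarith
    have h13 : γ m - γ n ≤ 1 := by linarith [hγmono hm2, ha_le n]
    have h14 : (γ m - γ n) * (L1 * G1 * ρ) ≤ 1 * (L1 * G1 * ρ) := by
      apply mul_le_mul_of_nonneg_right h13
      positivity
    have h15 : G1 * ρ + L1 * G1 * ρ ≤ K0 * (γ n ^ r)⁻¹ := by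
      rw [hK0def, hρdef]
      nlinarith [hL1_1, hG1_1, hB1_1, inv_nonneg.2 hγnr_pos.le, hρ0,
        mul_le_mul_of_nonneg_right hL1_1 (mul_nonneg (by linarith : (0:ℝ) ≤ G1)
          (mul_nonneg (by linarith : (0:ℝ) ≤ B1) (inv_nonneg.2 hγnr_pos.le)))]
    linarith
  -- chain lemma
  have chain : ∀ p n m, N ≤ n → n ≤ m → m - n ≤ p →
      f (x m) ≤ f (x n) + c * (γ n ^ (r - 1))⁻¹ := by
    intro p
    induction p with
    | zero =>
        intro n m hn hnm hp
        have hmn : m = n := by omega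
        subst hmn
        have hnn : 0 ≤ c * (γ m ^ (r - 1))⁻¹ :=
          mul_nonneg hc0.le (inv_nonneg.2 (Real.rpow_nonneg (hγ0 m) _))
        linarith
    | succ p ih =>
        intro n m hn hnm hp
        have hγn1 : (1:ℝ) ≤ γ n := (hN n hn).2.2.2.1
        have hγpos : (0:ℝ) < γ n := by linarith
        have hQpos : (0:ℝ) < γ n ^ r := Real.rpow_pos_of_pos hγpos r
        have hD1pos : (0:ℝ) < γ n ^ (r - 1) := Real.rpow_pos_of_pos hγpos _
        by_cases hcase : m ≤ a n
        · have h1 := window n hn m hnm hcase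
          have h2 : K0 * (γ n ^ r)⁻¹ ≤ c * (γ n ^ (r - 1))⁻¹ := by
            have hsplit : γ n ^ r = γ n ^ (r - 1) * γ n := by
              rw [← Real.rpow_add_one (ne_of_gt hγpos) (r - 1)]
              norm_num
            rw [hsplit, mul_inv]
            have hinvle : (γ n)⁻¹ ≤ 1 := inv_le_one_of_one_le₀ hγn1
            have hK0γ : K0 * (γ n)⁻¹ ≤ c := by
              calc K0 * (γ n)⁻¹ ≤ K0 * 1 :=
                    mul_le_mul_of_nonneg_left hinvle hK0pos.le
                _ = K0 := mul_one _
                _ ≤ c := hcK0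
            calc K0 * ((γ n ^ (r-1))⁻¹ * (γ n)⁻¹)
                = (K0 * (γ n)⁻¹) * (γ n ^ (r-1))⁻¹ := by ring
              _ ≤ c * (γ n ^ (r-1))⁻¹ :=
                  mul_le_mul_of_nonneg_right hK0γ (inv_nonneg.2 hD1pos.le)
          linarith
        · push_neg at hcase
          set n' := a n with hn'def
          have hn'ge : n + 1 ≤ n' := by
            have := (haS n).2 (n + 1) (Nat.le_succ n) (by
              rw [hγsucc]
              linarith [(hN n hn).1])
            omega
          have hn'N : N ≤ n' := le_trans hn (ha_ge n)
          have ihm : f (x m) ≤ f (x n') + c * (γ n' ^ (r - 1))⁻¹ :=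
            ih n' m hn'N (by omega) (by omega)
          have hwin : f (x n') ≤ f (x n) + K0 * (γ n ^ r)⁻¹ :=
            window n hn n' (ha_ge n) le_rfl
          have hγ' : γ n + 1/2 ≤ γ n' := by
            have h3 := ha_gt n
            rw [hγsucc] at h3
            have h4 : α n' ≤ 1/2 := (hN n' hn'N).1
            linarith
          have hgap := rpow_gap hr hγn1
          have hmono2 : (γ n' ^ (r - 1))⁻¹ ≤ ((γ n + 1/2) ^ (r - 1))⁻¹ := by
            apply inv_anti₀ (Real.rpow_pos_of_pos (by linarith) _)
            exact Real.rpow_le_rpow (by linarith) hγ' (by linarith)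
          -- key quantitative inequality
          have hkey : K0 * (γ n ^ r)⁻¹ ≤ c * ((r - 1) / (2 * (2 * γ n) ^ r)) := by
            set P : ℝ := (2:ℝ) ^ r with hPdef
            have hPpos : (0:ℝ) < P := Real.rpow_pos_of_pos two_pos r
            have h2γ : (2 * γ n) ^ r = P * γ n ^ r :=
              Real.mul_rpow (by norm_num) (hγ0 n)
            have h2r1 : (2:ℝ) ^ (r + 1) = 2 * P := by
              rw [hPdef, Real.rpow_add two_pos, Real.rpow_one]
              ring
            have hc' : K0 * (2 * P) ≤ c * (r - 1) := by
              rw [hcdef, h2r1]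
              have : K0 * (2 * P) / (r - 1) * (r - 1) = K0 * (2 * P) := by
                field_simp
              rw [add_mul, this]
              nlinarith [hK0pos, hr1]
            have e1 : c * ((r - 1) / (2 * (2 * γ n) ^ r)) =
                (c * (r - 1)) / (2 * P * γ n ^ r) := by
              rw [h2γ]; ring
            have e2 : K0 * (γ n ^ r)⁻¹ = (K0 * (2 * P)) / (2 * P * γ n ^ r) := by
              field_simp
            rw [e1, e2]
            exact (div_le_div_iff_of_pos_right (by positivity)).2 hc'
          have hfinal : K0 * (γ n ^ r)⁻¹ + c * (γ n' ^ (r - 1))⁻¹ ≤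
              c * (γ n ^ (r - 1))⁻¹ := by
            have h5 : c * ((r - 1) / (2 * (2 * γ n) ^ r)) ≤
                c * ((γ n ^ (r - 1))⁻¹ - ((γ n + 1/2) ^ (r - 1))⁻¹) :=
              mul_le_mul_of_nonneg_left hgap hc0.le
            have h6 : c * (γ n' ^ (r - 1))⁻¹ ≤ c * ((γ n + 1/2) ^ (r - 1))⁻¹ :=
              mul_le_mul_of_nonneg_left hmono2 hc0.le
            nlinarith [hkey, h5, h6]
          linarith
  -- conclusion
  obtain ⟨M, hM⟩ := hKcompact.exists_bound_of_continuousOn hfd.continuous.continuousOn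
  apply tendsto_liminf_of_quasi _ M (fun n => by
    rw [← Real.norm_eq_abs]; exact hM _ (hxK n)) (fun n => c * (γ n ^ (r - 1))⁻¹) ?_ N ?_
  · have h1 : Tendsto (fun n => γ n ^ (r - 1)) atTop atTop :=
      (_root_.tendsto_rpow_atTop hr1).comp hαdiv
    have h2 : Tendsto (fun n => (γ n ^ (r - 1))⁻¹) atTop (nhds 0) :=
      tendsto_inv_atTop_zero.comp h1
    have h3 := h2.const_mul c
    simpa using h3
  · intro n hn m hm
    exact chain (m - n) n m hn hm le_rfl
end core


open MeasureTheory

/-- Lemma 1.3' of the paper: under Assumptions 1.1, 1.2 and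
1.3, the sequence `{f(θ_n)}` converges almost surely on `Λ`, with limit equal
to `liminf_n f(θ_n)`. -/
theorem stochastic_gradient_value_converges
    {d : ℕ} (hd : 1 ≤ d)
    {Ω : Type} [MeasurableSpace Ω] (P : Measure Ω) [IsProbabilityMeasure P]
    (f : EuclideanSpace ℝ (Fin d) → ℝ)
    (hfd : Differentiable ℝ f)
    (hlip : LocallyLipschitz (fun x => gradient f x))
    (α : ℕ → ℝ) (hαpos : ∀ n, 0 < α n)
    (θ ξ : ℕ → Ω → EuclideanSpace ℝ (Fin d))
    (hrec : ∀ n ω, θ (n + 1) ω = θ n ω - α n • (gradient f (θ n ω) + ξ n ω))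
    -- Assumption 1.1
    (hα0 : Tendsto α atTop (nhds 0))
    (γ : ℕ → ℝ) (hγ : ∀ n, γ n = ∑ i ∈ Finset.range n, α i)
    (hαdiv : Tendsto γ atTop atTop)
    -- the interpolation index `a(n,t)`
    (a : ℕ → ℝ → ℕ)
    (ha : ∀ n t, 0 < t → a n t = sSup {k | n ≤ k ∧ γ k - γ n ≤ t})
    -- the event Λ
    (Λ : Set Ω) (hΛ : Λ = {ω | ∃ C, ∀ n, ‖θ n ω‖ ≤ C})
    -- Assumption 1.2
    (r : ℝ) (hr : 1 < r)
    (noise : ℕ → Ω → ℝ)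
    (hnoise : ∀ n ω, noise n ω =
      ⨆ k ∈ Set.Ico n (a n 1), ‖∑ i ∈ Finset.Icc n k, (α i * γ i ^ r) • ξ i ω‖)
    (hA12 : ∀ᵐ ω ∂P, ω ∈ Λ → IsBoundedUnder (· ≤ ·) atTop (fun n => noise n ω))
    -- Assumption 1.3 (Łojasiewicz-type gradient inequality)
    (hLoj : ∀ Q : Set (EuclideanSpace ℝ (Fin d)), IsCompact Q → ∀ b ∈ f '' Q,
      ∃ δ μ M : ℝ, δ ∈ Set.Ioc (0 : ℝ) 1 ∧ μ ∈ Set.Ioc (1 : ℝ) 2 ∧ 1 ≤ M ∧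
        ∀ x ∈ Q, |f x - b| ≤ δ → |f x - b| ≤ M * ‖gradient f x‖ ^ μ) :
    ∀ᵐ ω ∂P, ω ∈ Λ →
      Tendsto (fun n => f (θ n ω)) atTop
        (nhds (Filter.liminf (fun n => f (θ n ω)) atTop)) := by
  filter_upwards [hA12] with ω hbω hωΛ
  have hbnd := hbω hωΛ
  rw [hΛ] at hωΛ
  obtain ⟨C, hC⟩ := hωΛ
  obtain ⟨B, hB0⟩ := hbnd
  rw [eventually_map] at hB0
  obtain ⟨N0, hN0⟩ := eventually_atTop.1 hB0
  -- convert the iSup noise bound into a pointwise bound on partial sums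
  have hB : ∀ n, N0 ≤ n → ∀ k, n ≤ k → k < a n 1 →
      ‖∑ i ∈ Finset.Icc n k, (α i * γ i ^ r) • ξ i ω‖ ≤ B := by
    intro n hn k hk1 hk2
    set g : ℕ → ℝ := fun k => ‖∑ i ∈ Finset.Icc n k, (α i * γ i ^ r) • ξ i ω‖ with hg
    have hks : k ∈ Set.Ico n (a n 1) := ⟨hk1, hk2⟩
    have hfin : (Set.Ico n (a n 1)).Finite := Set.finite_Ico _ _
    have hbdd : BddAbove (Set.range fun j => ⨆ _ : j ∈ Set.Ico n (a n 1), g j) := by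
      apply ((hfin.image g).insert 0).bddAbove.mono
      rintro _ ⟨j, rfl⟩
      dsimp only
      by_cases hj : j ∈ Set.Ico n (a n 1)
      · rw [ciSup_pos hj]
        exact Set.mem_insert_of_mem _ ⟨j, hj, rfl⟩
      · haveI : IsEmpty (j ∈ Set.Ico n (a n 1)) := ⟨hj⟩
        rw [Real.iSup_of_isEmpty]
        exact Set.mem_insert _ _
    have h1 : g k ≤ noise n ω := by
      rw [hnoise]
      calc g k = ⨆ _ : k ∈ Set.Ico n (a n 1), g k := (ciSup_pos (f := fun _ => g k) hks).symm
        _ ≤ ⨆ j, ⨆ _ : j ∈ Set.Ico n (a n 1), g j := le_ciSup hbdd k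
    exact h1.trans (hN0 n hn)
  exact sgd_core f hfd hlip α hαpos (fun n => θ n ω) (fun n => ξ n ω)
    (fun n => hrec n ω) hα0 γ hγ hαdiv (fun n => a n 1) (fun n => ha n 1 one_pos)
    r hr C hC B N0 hB
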